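/- Let H ∈ (1/2,1) and Φ(x,y) := |1+x|^{2H} − |1+(x−y)|^{2H} − 1 + |1−y|^{2H}. Then sup_{(x,y) ∈ Q} |Φ(x,y)/(xy)| < ∞, where Q := {(x,y) ∈ (0,∞)² : max(x,y) < 1} ∪ {(x,y) ∈ (0,∞)² : min(x,y) < 1 ≤ max(x,y)}. -/

import Mathlib

open Real

noncomputable section

/-- `Φ(x,y) = |1+x|^{2H} − |1+(x−y)|^{2H} − 1 + |1−y|^{2H}`. -/
def PhiFn (H x y : ℝ) : ℝ :=
  |1 + x| ^ (2*H) - |1 + (x - y)| ^ (2*H) - 1 + |1 - y| ^ (2*H)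

end

/-- Concave increment bound: for `0 < α ≤ 1`, `0 < y < 1`, `b ≥ 1 - y`,
`(b+y)^α - b^α ≤ 3y`. -/
private lemma lemA {α y b : ℝ} (hα0 : 0 < α) (hα1 : α ≤ 1) (hy0 : 0 < y) (hy1 : y < 1)
    (hb : 1 - y ≤ b) : (b + y) ^ α - b ^ α ≤ 3 * y := by
  have hb0 : 0 < b := lt_of_lt_of_le (by linarith) hb
  by_cases hbh : (1:ℝ)/2 ≤ b
  · have hber : (1 + y/b) ^ α ≤ 1 + α * (y/b) :=
      rpow_one_add_le_one_add_mul_self (le_trans (by norm_num : (-1:ℝ) ≤ 0) (by positivity)) hα0.le hα1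
    have key : (b + y) ^ α ≤ b ^ α * (1 + α * (y/b)) := by
      have hbe : b + y = b * (1 + y/b) := by field_simp
      rw [hbe, Real.mul_rpow hb0.le (by positivity)]
      exact mul_le_mul_of_nonneg_left hber (Real.rpow_nonneg hb0.le _)
    have hratio : b ^ α / b ≤ 2 := by
      rcases le_total b 1 with h1 | h1
      · have h2 : b ^ α ≤ 1 := Real.rpow_le_one hb0.le h1 hα0.le
        rw [div_le_iff₀ hb0]; nlinarith
      · have h2 : b ^ α ≤ b := by
          calc b ^ α ≤ b ^ (1:ℝ) := Real.rpow_le_rpow_of_exponent_le h1 hα1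
          _ = b := Real.rpow_one b
        rw [div_le_iff₀ hb0]; nlinarith
    calc (b + y) ^ α - b ^ α ≤ b ^ α * (1 + α * (y/b)) - b ^ α := by linarith
      _ = α * y * (b ^ α / b) := by field_simp; ring
      _ ≤ α * y * 2 := mul_le_mul_of_nonneg_left hratio (by positivity)
      _ ≤ 3 * y := by nlinarith
  · push_neg at hbh
    have hy2 : 1/2 < y := by linarith
    have h1 : (b + y) ^ α ≤ 3/2 := by
      calc (b + y) ^ α ≤ (3/2 : ℝ) ^ α := Real.rpow_le_rpow (by positivity) (by linarith) hα0.le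
        _ ≤ (3/2 : ℝ) ^ (1:ℝ) := Real.rpow_le_rpow_of_exponent_le (by norm_num) hα1
        _ = 3/2 := Real.rpow_one _
    have h2 : 0 ≤ b ^ α := Real.rpow_nonneg hb0.le α
    linarith

/-- Convex increment bound: for `1 ≤ p ≤ 2`, `0 ≤ v ≤ u ≤ M`, `1 ≤ M`,
`u^p - v^p ≤ p M (u - v)`. -/
private lemma lemB {p u v M : ℝ} (hp1 : 1 ≤ p) (hp2 : p ≤ 2) (hv : 0 ≤ v) (hvu : v ≤ u)
    (huM : u ≤ M) (hM : 1 ≤ M) : u ^ p - v ^ p ≤ p * M * (u - v) := by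
  rcases eq_or_lt_of_le (hv.trans hvu) with hu0 | hu0
  · have hv0 : v = 0 := le_antisymm (hvu.trans_eq hu0.symm) hv
    rw [← hu0, hv0, Real.zero_rpow (by linarith)]
    simp
  · have hs : -1 ≤ v/u - 1 := by
      have : 0 ≤ v/u := by positivity
      linarith
    have hber := one_add_mul_self_le_rpow_one_add hs hp1
    have h1 : (1 + (v/u - 1)) = v/u := by ring
    rw [h1, Real.div_rpow hv hu0.le] at hber
    have hup : 0 < u ^ p := Real.rpow_pos_of_pos hu0 p
    have h2 : u ^ p - v ^ p ≤ p * (u ^ p / u) * (u - v) := by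
      have h3 := mul_le_mul_of_nonneg_left hber hup.le
      rw [mul_div_cancel₀ _ (ne_of_gt hup)] at h3
      -- h3 : u^p * (1 + p * (v/u - 1)) ≤ v^p
      have h4 : u ^ p * (1 + p * (v/u - 1)) = u ^ p - p * (u ^ p / u) * (u - v) := by
        field_simp; ring
      linarith [h4 ▸ h3]
    have hrat : u ^ p / u ≤ M := by
      rcases le_total u 1 with h1u | h1u
      · have : u ^ p ≤ u ^ (1:ℝ) := Real.rpow_le_rpow_of_exponent_ge hu0 h1u hp1
        rw [Real.rpow_one] at this
        calc u ^ p / u ≤ u / u := by gcongr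
          _ = 1 := div_self (ne_of_gt hu0)
          _ ≤ M := hM
      · have h5 : u ^ p ≤ u ^ (2:ℝ) := Real.rpow_le_rpow_of_exponent_le h1u hp2
        have h6 : u ^ (2:ℝ) = u * u := by
          rw [show (2:ℝ) = ((2:ℕ):ℝ) by norm_num, Real.rpow_natCast]; ring
        calc u ^ p / u ≤ u * u / u := by rw [← h6]; gcongr
          _ = u := by field_simp
          _ ≤ M := huM
    calc u ^ p - v ^ p ≤ p * (u ^ p / u) * (u - v) := h2
      _ ≤ p * M * (u - v) := by
          have : 0 ≤ u - v := by linarith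
          have hp0 : 0 ≤ p := by linarith
          exact mul_le_mul_of_nonneg_right (by nlinarith) this

/-- For `H ∈ (1/2,1)`, `sup_{(x,y) ∈ Q} |Φ(x,y)/(xy)| < ∞`, where
`Q = {(x,y) ∈ (0,∞)² : max(x,y) < 1} ∪ {(x,y) ∈ (0,∞)² : min(x,y) < 1 ≤ max(x,y)}`. -/
theorem statement9 (H : ℝ) (hH : H ∈ Set.Ioo (1/2 : ℝ) 1) :
    ∃ C : ℝ, ∀ x y : ℝ, 0 < x → 0 < y →
      (max x y < 1 ∨ (min x y < 1 ∧ 1 ≤ max x y)) →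
      |PhiFn H x y / (x * y)| ≤ C := by
  obtain ⟨hH1, hH2⟩ := hH
  refine ⟨6, fun x y hx hy hQ => ?_⟩
  -- reduce the region to two cases
  have hcase : y < 1 ∨ (1 ≤ y ∧ x < 1) := by
    rcases hQ with h | ⟨hmin, _⟩
    · exact Or.inl (lt_of_le_of_lt (le_max_right x y) h)
    · rcases lt_or_ge y 1 with h | h
      · exact Or.inl h
      · refine Or.inr ⟨h, ?_⟩
        by_contra hx1
        push_neg at hx1
        exact absurd (le_min hx1 h) (not_le.mpr hmin)
  have hxy : (0:ℝ) < x * y := mul_pos hx hy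
  -- it suffices to bound |Φ| by 6 x y
  suffices hbound : |PhiFn H x y| ≤ 6 * (x * y) by
    rw [abs_div, abs_of_pos hxy, div_le_iff₀ hxy]
    linarith
  rcases hcase with hylt | ⟨hyge, hxlt⟩
  · -- Case A : y < 1.  Mean value theorem on F u = (1+u)^{2H} - (1+u-y)^{2H}.
    set F : ℝ → ℝ := fun u => (1+u) ^ (2*H) - (1+u-y) ^ (2*H) with hF
    set F' : ℝ → ℝ := fun u => 2*H * (1+u) ^ (2*H-1) - 2*H * (1+u-y) ^ (2*H-1) with hF'
    have hderiv : ∀ u ∈ Set.Icc (0:ℝ) x, HasDerivWithinAt F (F' u) (Set.Icc 0 x) u := by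
      intro u hu
      have h1u : (0:ℝ) < 1 + u := by linarith [hu.1]
      have h2u : (0:ℝ) < 1 + u - y := by linarith [hu.1]
      have d1 : HasDerivAt (fun u : ℝ => (1+u) ^ (2*H)) (2*H * (1+u) ^ (2*H-1)) u := by
        have hc : HasDerivAt (fun u : ℝ => 1 + u) 1 u := (hasDerivAt_id u).const_add 1
        have := (Real.hasDerivAt_rpow_const (x := 1+u) (p := 2*H) (Or.inl h1u.ne')).comp u hc
        simpa [Function.comp_def] using this
      have d2 : HasDerivAt (fun u : ℝ => (1+u-y) ^ (2*H)) (2*H * (1+u-y) ^ (2*H-1)) u := by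
        have hc : HasDerivAt (fun u : ℝ => 1 + u - y) 1 u :=
          ((hasDerivAt_id u).const_add 1).sub_const y
        have := (Real.hasDerivAt_rpow_const (x := 1+u-y) (p := 2*H) (Or.inl h2u.ne')).comp u hc
        simpa [Function.comp_def] using this
      exact ((d1.sub d2).hasDerivWithinAt)
    have hbd : ∀ u ∈ Set.Ico (0:ℝ) x, ‖F' u‖ ≤ 6 * y := by
      intro u hu
      have h0u : (0:ℝ) ≤ u := hu.1
      have hA := lemA (α := 2*H-1) (b := 1+u-y) (by linarith) (by linarith) hy hylt
        (by linarith)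
      have he : (1+u-y) + y = 1 + u := by ring
      rw [he] at hA
      have hmono : (1+u-y) ^ (2*H-1) ≤ (1+u) ^ (2*H-1) :=
        Real.rpow_le_rpow (by linarith) (by linarith) (by linarith)
      have hFval : F' u = 2*H * ((1+u) ^ (2*H-1) - (1+u-y) ^ (2*H-1)) := by
        rw [hF']; ring
      rw [Real.norm_eq_abs, hFval, abs_of_nonneg (by nlinarith)]
      nlinarith
    have key := norm_image_sub_le_of_norm_deriv_le_segment' hderiv hbd x
      (Set.right_mem_Icc.mpr hx.le)
    have hPhi : PhiFn H x y = F x - F 0 := by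
      have e1 : |1 + x| = 1 + x := abs_of_pos (by linarith)
      have e2 : |1 + (x - y)| = 1 + x - y := by
        rw [abs_of_pos (by linarith)]; ring
      have e3 : |1 - y| = 1 - y := abs_of_pos (by linarith)
      simp only [PhiFn, e1, e2, e3, hF]
      norm_num [Real.one_rpow]
      ring
    rw [hPhi]
    calc |F x - F 0| = ‖F x - F 0‖ := (Real.norm_eq_abs _).symm
      _ ≤ 6 * y * (x - 0) := key
      _ = 6 * (x * y) := by ring
  · -- Case B : 1 ≤ y and x < 1.
    have e1 : |1 + x| = 1 + x := abs_of_pos (by linarith)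
    have e3 : |1 - y| = y - 1 := by
      rw [abs_of_nonpos (by linarith)]; ring
    set u := |1 + (x - y)| with hu
    have hu0 : 0 ≤ u := abs_nonneg _
    have hv0 : (0:ℝ) ≤ y - 1 := by linarith
    have hPhi : PhiFn H x y = ((1+x) ^ (2*H) - 1) - (u ^ (2*H) - (y-1) ^ (2*H)) := by
      simp only [PhiFn, e1, e3, hu]
      ring
    have hdist : |u - (y - 1)| ≤ x := by
      have h := abs_abs_sub_abs_le_abs_sub (1 + (x - y)) (1 - y)
      rw [← hu, e3] at h
      calc |u - (y-1)| ≤ |(1 + (x - y)) - (1 - y)| := h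
        _ = x := by rw [show (1 + (x - y)) - (1 - y) = x by ring, abs_of_pos hx]
    have huy : u ≤ y := by
      rw [hu, abs_le]
      constructor <;> [skip; skip] <;> nlinarith
    have hvy : y - 1 ≤ y := by linarith
    -- first term
    have hterm1a : (1+x) ^ (2*H) - 1 ≤ 3 * x := by
      have h5 : (1+x) ^ (2*H) ≤ (1+x) ^ (2:ℝ) :=
        Real.rpow_le_rpow_of_exponent_le (by linarith) (by linarith)
      have h6 : (1+x) ^ (2:ℝ) = (1+x) * (1+x) := by
        rw [show (2:ℝ) = ((2:ℕ):ℝ) by norm_num, Real.rpow_natCast]; ring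
      rw [h6] at h5
      nlinarith [mul_nonneg hx.le (by linarith : (0:ℝ) ≤ 1 - x)]
    have hterm1b : (1:ℝ) ≤ (1+x) ^ (2*H) := by
      calc (1:ℝ) = (1:ℝ) ^ (2*H) := (Real.one_rpow _).symm
        _ ≤ (1+x) ^ (2*H) := Real.rpow_le_rpow (by norm_num) (by linarith) (by linarith)
    -- second term
    have hterm2 : |u ^ (2*H) - (y-1) ^ (2*H)| ≤ 2 * (x * y) := by
      rcases le_total (y-1) u with hc | hc
      · rw [abs_of_nonneg (sub_nonneg.mpr (Real.rpow_le_rpow hv0 hc (by linarith)))]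
        have hB := lemB (p := 2*H) (u := u) (v := y-1) (M := y)
          (by linarith) (by linarith) hv0 hc huy hyge
        have h7 : u - (y-1) ≤ x := by
          linarith [le_abs_self (u - (y-1)), hdist]
        nlinarith [mul_nonneg hy.le (sub_nonneg.mpr h7),
          mul_nonneg (mul_nonneg (by linarith : (0:ℝ) ≤ 2 - 2*H) hy.le)
            (by linarith : (0:ℝ) ≤ u - (y-1))]
      · rw [abs_of_nonpos (sub_nonpos.mpr (Real.rpow_le_rpow hu0 hc (by linarith))),
          neg_sub]
        have hB := lemB (p := 2*H) (u := y-1) (v := u) (M := y)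
          (by linarith) (by linarith) hu0 hc hvy hyge
        have h7 : (y-1) - u ≤ x := by
          linarith [neg_abs_le (u - (y-1)), hdist]
        nlinarith [mul_nonneg hy.le (sub_nonneg.mpr h7),
          mul_nonneg (mul_nonneg (by linarith : (0:ℝ) ≤ 2 - 2*H) hy.le)
            (by linarith : (0:ℝ) ≤ (y-1) - u)]
    rw [hPhi]
    have h8 : 3 * x ≤ 3 * (x * y) := by nlinarith
    calc |((1+x) ^ (2*H) - 1) - (u ^ (2*H) - (y-1) ^ (2*H))|
        ≤ |(1+x) ^ (2*H) - 1| + |u ^ (2*H) - (y-1) ^ (2*H)| := abs_sub _ _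
      _ ≤ 3 * x + 2 * (x * y) := by
          have : |(1+x) ^ (2*H) - 1| = (1+x) ^ (2*H) - 1 := abs_of_nonneg (by linarith)
          linarith [this ▸ hterm1a]
      _ ≤ 6 * (x * y) := by linarith
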